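/- Let t₀∈ℝ and let t↦g(t) be a C¹ family of symmetric positive-definite real 3×3 matrices on [t₀,∞). Set k(t)=½g'(t), H(t)=(1/3)tr(g(t)^{−1}k(t)), σ(t)=k(t)−H(t)g(t), and F(t)=tr((g(t)^{−1}σ(t))²)/(4H(t)²). Assume H(t)>0 and F(t)<1/4 for all t≥t₀. Then: (i) for every fixed p∈ℝ³ with p≠0, the function t ↦ p⁰(t) := √(1+pᵀg(t)^{−1}p) is strictly decreasing on [t₀,∞); (ii) if in addition there are constants c₀, H₀ with pᵀg(t)^{−1}p ≤ c₀|p|² for all p and t, and H(t) ≤ H₀ for all t, then there is a constant C>0 with |∂_t p⁰(t)| ≤ C√(1+|p|²) for all t≥t₀ and p∈ℝ³. -/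

import Mathlib

open Matrix

noncomputable section

/-- The Hubble variable `H = (1/3) tr(g⁻¹ k)` built from a metric `g` and a
second fundamental form `k`. -/
def hubble (g k : Matrix (Fin 3) (Fin 3) ℝ) : ℝ := Matrix.trace (g⁻¹ * k) / 3

/-- The trace-free part `σ = k − H g` of the second fundamental form. -/
def shear (g k : Matrix (Fin 3) (Fin 3) ℝ) : Matrix (Fin 3) (Fin 3) ℝ :=
  k - hubble g k • g

/-- The scaled shear `F = σ_{ab}σ^{ab}/(4H²) = tr((g⁻¹σ)²)/(4H²)`. -/
def scaledShear (g k : Matrix (Fin 3) (Fin 3) ℝ) : ℝ :=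
  Matrix.trace ((g⁻¹ * shear g k) * (g⁻¹ * shear g k)) / (4 * (hubble g k)^2)

attribute [local instance] Matrix.linftyOpNormedRing Matrix.linftyOpNormedAlgebra

namespace BianchiAux

abbrev M3 := Matrix (Fin 3) (Fin 3) ℝ

lemma symm_dot (A : M3) (hA : A.IsSymm) (v x : Fin 3 → ℝ) :
    v ⬝ᵥ (A *ᵥ x) = (A *ᵥ v) ⬝ᵥ x := by
  rw [dotProduct_mulVec, ← Matrix.mulVec_transpose, hA.eq]

lemma dot_self_nonneg (w : Fin 3 → ℝ) : 0 ≤ w ⬝ᵥ w :=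
  Finset.sum_nonneg fun i _ => mul_self_nonneg (w i)

/-- Cauchy–Schwarz for quadratic forms. -/
lemma quad_cs (M : M3) (w : Fin 3 → ℝ) :
    (w ⬝ᵥ (M *ᵥ w)) ^ 2 ≤ (∑ i, ∑ j, (M i j) ^ 2) * (w ⬝ᵥ w) ^ 2 := by
  have h := Finset.sum_mul_sq_le_sq_mul_sq Finset.univ
      (fun q : Fin 3 × Fin 3 => M q.1 q.2) (fun q : Fin 3 × Fin 3 => w q.1 * w q.2)
  have e1 : w ⬝ᵥ (M *ᵥ w) = ∑ q : Fin 3 × Fin 3, (M q.1 q.2) * (w q.1 * w q.2) := by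
    rw [Fintype.sum_prod_type]
    simp only [dotProduct, mulVec, Finset.mul_sum]
    exact Finset.sum_congr rfl fun i _ => Finset.sum_congr rfl fun j _ => by ring
  have e2 : ∑ q : Fin 3 × Fin 3, (w q.1 * w q.2) ^ 2 = (w ⬝ᵥ w) ^ 2 := by
    rw [Fintype.sum_prod_type]
    simp only [dotProduct, mul_pow, sq, Finset.sum_mul, Finset.mul_sum]
    exact Finset.sum_congr rfl fun i _ => Finset.sum_congr rfl fun j _ => by ring
  have e3 : (∑ q : Fin 3 × Fin 3, (M q.1 q.2) ^ 2) = ∑ i, ∑ j, (M i j) ^ 2 := by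
    rw [Fintype.sum_prod_type]
  rw [e1]
  calc (∑ q : Fin 3 × Fin 3, (M q.1 q.2) * (w q.1 * w q.2)) ^ 2
      ≤ (∑ q : Fin 3 × Fin 3, (M q.1 q.2) ^ 2) *
          (∑ q : Fin 3 × Fin 3, (w q.1 * w q.2) ^ 2) := h
    _ = (∑ i, ∑ j, (M i j) ^ 2) * (w ⬝ᵥ w) ^ 2 := by rw [e2, e3]

set_option maxHeartbeats 1000000 in
/-- The shear bound: `|qᵀσq| ≤ √(tr((g⁻¹σ)²)) qᵀgq` for symmetric `σ` and
positive definite `g`. -/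
lemma sigma_quad_bound (g σ : M3) (hg : g.PosDef) (hσ : σ.IsSymm) (q : Fin 3 → ℝ) :
    |q ⬝ᵥ (σ *ᵥ q)| ≤
      Real.sqrt (Matrix.trace ((g⁻¹ * σ) * (g⁻¹ * σ))) * (q ⬝ᵥ (g *ᵥ q)) := by
  have hgs : g.IsSymm := by
    show gᵀ = g
    rw [← Matrix.conjTranspose_eq_transpose_of_trivial]
    exact hg.1
  obtain ⟨S, hSpsd, hS2⟩ : ∃ S : M3, S.PosSemidef ∧ S * S = g :=
    open scoped MatrixOrder in ⟨CFC.sqrt g, Matrix.nonneg_iff_posSemidef.1 (CFC.sqrt_nonneg g),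
      CFC.sqrt_mul_sqrt_self g (Matrix.nonneg_iff_posSemidef.2 hg.posSemidef)⟩
  have hSsym : S.IsSymm := by
    show Sᵀ = S
    rw [← Matrix.conjTranspose_eq_transpose_of_trivial]
    exact hSpsd.1
  have hdetS : IsUnit S.det := by
    rw [isUnit_iff_ne_zero]
    intro h0
    have : g.det = 0 := by rw [← hS2, Matrix.det_mul, h0, mul_zero]
    exact absurd this (ne_of_gt hg.det_pos)
  set X := S⁻¹ with hXdef
  have hXS : X * S = 1 := Matrix.nonsing_inv_mul S hdetS
  have hSX : S * X = 1 := Matrix.mul_nonsing_inv S hdetS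
  have hXsym : X.IsSymm := by
    show Xᵀ = X
    rw [hXdef, Matrix.transpose_nonsing_inv, hSsym.eq]
  have hginv : g⁻¹ = X * X := by rw [← hS2, Matrix.mul_inv_rev]
  set M := X * σ * X with hMdef
  have hMsym : M.IsSymm := by
    show Mᵀ = M
    rw [hMdef, Matrix.transpose_mul, Matrix.transpose_mul, hXsym.eq, hσ.eq, mul_assoc]
  -- trace identity
  have htr : Matrix.trace (M * M) = Matrix.trace ((g⁻¹ * σ) * (g⁻¹ * σ)) := by
    have h1 : (g⁻¹ * σ) * (g⁻¹ * σ) = X * ((X * σ * X * X) * σ) := by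
      rw [hginv]; simp only [Matrix.mul_assoc]
    have h2 : M * M = ((X * σ * X * X) * σ) * X := by
      rw [hMdef]; simp only [Matrix.mul_assoc]
    rw [h1, h2, Matrix.trace_mul_comm]
  -- trace as sum of squares
  have htrsum : Matrix.trace (M * M) = ∑ i, ∑ j, (M i j) ^ 2 := by
    rw [Matrix.trace]
    simp only [Matrix.diag_apply, Matrix.mul_apply, sq]
    exact Finset.sum_congr rfl fun i _ => Finset.sum_congr rfl fun j _ => by
      have : M j i = M i j := by
        conv_lhs => rw [← hMsym.eq]
        rfl
      rw [this]
  set w := S *ᵥ q with hwdef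
  have hwg : q ⬝ᵥ (g *ᵥ q) = w ⬝ᵥ w := by
    rw [hwdef, ← hS2, ← Matrix.mulVec_mulVec, symm_dot S hSsym]
  have hwσ : q ⬝ᵥ (σ *ᵥ q) = w ⬝ᵥ (M *ᵥ w) := by
    have hMw : M *ᵥ w = X *ᵥ (σ *ᵥ q) := by
      rw [hwdef, Matrix.mulVec_mulVec, hMdef]
      have : X * σ * X * S = X * σ := by rw [mul_assoc, hXS, mul_one]
      rw [this, ← Matrix.mulVec_mulVec]
    rw [hMw, symm_dot X hXsym, hwdef, Matrix.mulVec_mulVec, hXS, Matrix.one_mulVec]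
  have hcs := quad_cs M w
  have habs : |w ⬝ᵥ (M *ᵥ w)| ≤ Real.sqrt (∑ i, ∑ j, (M i j) ^ 2) * (w ⬝ᵥ w) := by
    have h1 : |w ⬝ᵥ (M *ᵥ w)| = Real.sqrt ((w ⬝ᵥ (M *ᵥ w)) ^ 2) :=
      (Real.sqrt_sq_eq_abs _).symm
    rw [h1]
    calc Real.sqrt ((w ⬝ᵥ (M *ᵥ w)) ^ 2)
        ≤ Real.sqrt ((∑ i, ∑ j, (M i j) ^ 2) * (w ⬝ᵥ w) ^ 2) := Real.sqrt_le_sqrt hcs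
      _ = Real.sqrt (∑ i, ∑ j, (M i j) ^ 2) * Real.sqrt ((w ⬝ᵥ w) ^ 2) :=
          Real.sqrt_mul (by positivity) _
      _ = Real.sqrt (∑ i, ∑ j, (M i j) ^ 2) * (w ⬝ᵥ w) := by
          rw [Real.sqrt_sq (dot_self_nonneg w)]
  rw [hwσ, hwg, ← htr, htrsum]
  exact habs

/-- Positivity and boundedness of the kinetic quadratic form. -/
lemma kinetic_bounds (g k : M3) (hg : g.PosDef) (hk : k.IsSymm)
    (hH : 0 < hubble g k) (hF : scaledShear g k < 1/4) :
    (∀ q : Fin 3 → ℝ, q ≠ 0 → 0 < q ⬝ᵥ (k *ᵥ q)) ∧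
    (∀ q : Fin 3 → ℝ, |q ⬝ᵥ (k *ᵥ q)| ≤ 2 * hubble g k * (q ⬝ᵥ (g *ᵥ q))) := by
  set H := hubble g k with hHdef
  set σ := shear g k with hσdef
  have hgs : g.IsSymm := by
    show gᵀ = g
    rw [← Matrix.conjTranspose_eq_transpose_of_trivial]
    exact hg.1
  have hσs : σ.IsSymm := by
    rw [hσdef, shear]
    exact hk.sub (hgs.smul _)
  have htr : Matrix.trace ((g⁻¹ * σ) * (g⁻¹ * σ)) < H ^ 2 := by
    have h4 : 0 < 4 * H ^ 2 := by positivity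
    have := hF
    rw [scaledShear] at this
    rw [div_lt_iff₀ h4] at this
    calc Matrix.trace ((g⁻¹ * σ) * (g⁻¹ * σ)) < 1/4 * (4 * H ^ 2) := this
      _ = H ^ 2 := by ring
  have hs : Real.sqrt (Matrix.trace ((g⁻¹ * σ) * (g⁻¹ * σ))) < H :=
    (Real.sqrt_lt' hH).2 htr
  have hks : ∀ q : Fin 3 → ℝ,
      q ⬝ᵥ (k *ᵥ q) = q ⬝ᵥ (σ *ᵥ q) + H * (q ⬝ᵥ (g *ᵥ q)) := by
    intro q
    have hk' : k = σ + H • g := by rw [hσdef, shear]; abel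
    rw [hk', Matrix.add_mulVec, dotProduct_add, Matrix.smul_mulVec,
      dotProduct_smul, smul_eq_mul]
  constructor
  · intro q hq
    have hgq : 0 < q ⬝ᵥ (g *ᵥ q) := by
      have := hg.dotProduct_mulVec_pos hq
      simpa using this
    have hb := sigma_quad_bound g σ hg hσs q
    have hb' := (abs_le.1 hb).1
    have hpos : 0 < (H - Real.sqrt (Matrix.trace ((g⁻¹ * σ) * (g⁻¹ * σ)))) *
        (q ⬝ᵥ (g *ᵥ q)) := mul_pos (sub_pos.2 hs) hgq
    rw [sub_mul] at hpos
    rw [hks q]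
    linarith
  · intro q
    have hgq0 : 0 ≤ q ⬝ᵥ (g *ᵥ q) := by
      have := hg.posSemidef.dotProduct_mulVec_nonneg q
      simpa using this
    have hb := sigma_quad_bound g σ hg hσs q
    have hHb : Real.sqrt (Matrix.trace ((g⁻¹ * σ) * (g⁻¹ * σ))) * (q ⬝ᵥ (g *ᵥ q))
        ≤ H * (q ⬝ᵥ (g *ᵥ q)) := mul_le_mul_of_nonneg_right hs.le hgq0
    have habs : |q ⬝ᵥ (k *ᵥ q)| ≤ |q ⬝ᵥ (σ *ᵥ q)| + |H * (q ⬝ᵥ (g *ᵥ q))| := by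
      rw [hks q]; exact abs_add_le _ _
    have hH2 : |H * (q ⬝ᵥ (g *ᵥ q))| = H * (q ⬝ᵥ (g *ᵥ q)) :=
      abs_of_nonneg (mul_nonneg hH.le hgq0)
    rw [hH2] at habs
    nlinarith [habs, hb, hHb]

/-- The matrix-valued function `g` has derivative `g' t` within `Ici t₀`. -/
lemma matrix_hasDeriv (t₀ : ℝ) (g g' : ℝ → M3)
    (hderiv : ∀ t ∈ Set.Ici t₀, ∀ a b,
      HasDerivWithinAt (fun s => g s a b) (g' t a b) (Set.Ici t₀) t)
    {t : ℝ} (ht : t ∈ Set.Ici t₀) :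
    HasDerivWithinAt g (g' t) (Set.Ici t₀) t := by
  have hrepr : ∀ A : M3, A = ∑ a : Fin 3, ∑ b : Fin 3, (A a b) • Matrix.single a b (1:ℝ) := by
    intro A
    conv_lhs => rw [matrix_eq_sum_single A]
    exact Finset.sum_congr rfl fun a _ => Finset.sum_congr rfl fun b _ => by
      rw [smul_single, smul_eq_mul, mul_one]
  have H : HasDerivWithinAt
      (fun s => ∑ a : Fin 3, ∑ b : Fin 3, (g s a b) • Matrix.single a b (1:ℝ))
      (∑ a : Fin 3, ∑ b : Fin 3, (g' t a b) • Matrix.single a b (1:ℝ))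
      (Set.Ici t₀) t :=
    HasDerivWithinAt.fun_sum fun a _ => HasDerivWithinAt.fun_sum fun b _ =>
      (hderiv t ht a b).smul_const _
  rw [← hrepr (g' t)] at H
  exact H.congr (fun y _ => hrepr (g y)) (hrepr (g t))

/-- Derivative of `s ↦ pᵀ g(s)⁻¹ p`. -/
lemma quad_deriv (t₀ : ℝ) (g g' : ℝ → M3)
    (hpos : ∀ t ∈ Set.Ici t₀, (g t).PosDef)
    (hderiv : ∀ t ∈ Set.Ici t₀, ∀ a b,
      HasDerivWithinAt (fun s => g s a b) (g' t a b) (Set.Ici t₀) t)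
    {t : ℝ} (ht : t ∈ Set.Ici t₀) (p : Fin 3 → ℝ) :
    HasDerivWithinAt (fun s => p ⬝ᵥ ((g s)⁻¹ *ᵥ p))
      (-(p ⬝ᵥ (((g t)⁻¹ * g' t * (g t)⁻¹) *ᵥ p))) (Set.Ici t₀) t := by
  have hG := matrix_hasDeriv t₀ g g' hderiv ht
  obtain ⟨u, hu⟩ := (hpos t ht).isUnit
  have hfd : HasFDerivAt Ring.inverse
      (-(ContinuousLinearMap.mulLeftRight ℝ M3 ↑u⁻¹ ↑u⁻¹)) (g t) := by
    rw [← hu]; exact hasFDerivAt_ringInverse u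
  have h1 : HasDerivWithinAt (fun s => Ring.inverse (g s))
      ((-(ContinuousLinearMap.mulLeftRight ℝ M3 ↑u⁻¹ ↑u⁻¹)) (g' t)) (Set.Ici t₀) t :=
    hfd.comp_hasDerivWithinAt t hG
  have huinv : (↑u⁻¹ : M3) = (g t)⁻¹ := by
    rw [Matrix.coe_units_inv, hu]
  have hval : ((-(ContinuousLinearMap.mulLeftRight ℝ M3 ↑u⁻¹ ↑u⁻¹)) (g' t) : M3)
      = -((g t)⁻¹ * g' t * (g t)⁻¹) := by
    rw [ContinuousLinearMap.neg_apply, ContinuousLinearMap.mulLeftRight_apply, huinv]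
  rw [hval] at h1
  have h2 : HasDerivWithinAt (fun s => (g s)⁻¹)
      (-((g t)⁻¹ * g' t * (g t)⁻¹)) (Set.Ici t₀) t := by
    refine h1.congr (fun y _ => ?_) ?_ <;>
      rw [Matrix.nonsing_inv_eq_ringInverse]
  -- apply the continuous linear functional A ↦ p ⬝ᵥ (A *ᵥ p)
  let L : M3 →L[ℝ] ℝ := LinearMap.toContinuousLinearMap
    { toFun := fun A : M3 => p ⬝ᵥ (A *ᵥ p)
      map_add' := fun A B => by simp [Matrix.add_mulVec, dotProduct_add]
      map_smul' := fun c A => by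
        simp [Matrix.smul_mulVec, dotProduct_smul, smul_eq_mul] }
  have h3 := L.hasFDerivAt.comp_hasDerivWithinAt t h2
  have hLval : L (-((g t)⁻¹ * g' t * (g t)⁻¹))
      = -(p ⬝ᵥ (((g t)⁻¹ * g' t * (g t)⁻¹) *ᵥ p)) := by
    show p ⬝ᵥ ((-((g t)⁻¹ * g' t * (g t)⁻¹)) *ᵥ p) = _
    rw [Matrix.neg_mulVec, dotProduct_neg]
  replace h3 := h3.congr_deriv hLval
  exact h3

end BianchiAux

open BianchiAux in
/-- **Monotonicity and boundedness of `p⁰` along a Bianchi I metric**: if `g(t)` is a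
C¹ family of symmetric positive-definite metrics with `k = ½ġ`, `H > 0` and scaled
shear `F < 1/4`, then (i) for every `p ≠ 0` the energy `p⁰(t) = √(1 + pᵀg(t)⁻¹p)` is
strictly decreasing, and (ii) if moreover `pᵀg(t)⁻¹p ≤ c₀|p|²` and `H ≤ H₀`, then
`|∂_t p⁰| ≤ C√(1+|p|²)` for a constant `C`. -/
theorem energy_monotone_and_bounded
    (t₀ : ℝ) (g g' : ℝ → Matrix (Fin 3) (Fin 3) ℝ)
    (hsymm : ∀ t ∈ Set.Ici t₀, (g t).IsSymm)
    (hpos : ∀ t ∈ Set.Ici t₀, (g t).PosDef)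
    (hderiv : ∀ t ∈ Set.Ici t₀, ∀ a b,
      HasDerivWithinAt (fun s => g s a b) (g' t a b) (Set.Ici t₀) t)
    (hcont : ∀ a b, ContinuousOn (fun t => g' t a b) (Set.Ici t₀))
    (hH : ∀ t ∈ Set.Ici t₀, 0 < hubble (g t) ((1/2 : ℝ) • g' t))
    (hF : ∀ t ∈ Set.Ici t₀, scaledShear (g t) ((1/2 : ℝ) • g' t) < 1/4) :
    (∀ p : Fin 3 → ℝ, p ≠ 0 →
      StrictAntiOn (fun t => Real.sqrt (1 + p ⬝ᵥ ((g t)⁻¹ *ᵥ p))) (Set.Ici t₀)) ∧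
    (∀ c₀ H₀ : ℝ,
      (∀ t ∈ Set.Ici t₀, ∀ p : Fin 3 → ℝ, p ⬝ᵥ ((g t)⁻¹ *ᵥ p) ≤ c₀ * (p ⬝ᵥ p)) →
      (∀ t ∈ Set.Ici t₀, hubble (g t) ((1/2 : ℝ) • g' t) ≤ H₀) →
      ∃ C > 0, ∀ t ∈ Set.Ici t₀, ∀ p : Fin 3 → ℝ,
        |derivWithin (fun s => Real.sqrt (1 + p ⬝ᵥ ((g s)⁻¹ *ᵥ p))) (Set.Ici t₀) t|
          ≤ C * Real.sqrt (1 + p ⬝ᵥ p)) := by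
  have hksym : ∀ t ∈ Set.Ici t₀, (((1/2 : ℝ) • g' t)).IsSymm := by
    intro t ht
    have hsym' : ∀ a b, g' t a b = g' t b a := by
      intro a b
      have h1 := hderiv t ht a b
      have h2 : HasDerivWithinAt (fun s => g s a b) (g' t b a) (Set.Ici t₀) t := by
        refine (hderiv t ht b a).congr (fun y hy => ?_) ?_
        · exact (congrFun (congrFun (hsymm y hy).eq a) b).symm
        · exact (congrFun (congrFun (hsymm t ht).eq a) b).symm
      calc g' t a b
          = derivWithin (fun s => g s a b) (Set.Ici t₀) t :=
            (h1.derivWithin ((uniqueDiffOn_Ici t₀) t ht)).symm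
        _ = g' t b a := h2.derivWithin ((uniqueDiffOn_Ici t₀) t ht)
    have hg's : (g' t).IsSymm := by
      show (g' t)ᵀ = g' t
      ext i j
      exact hsym' j i
    exact hg's.smul _
  -- the central derivative computation
  have main : ∀ t ∈ Set.Ici t₀, ∀ p : Fin 3 → ℝ,
      HasDerivWithinAt (fun s => Real.sqrt (1 + p ⬝ᵥ ((g s)⁻¹ *ᵥ p)))
        (-(((g t)⁻¹ *ᵥ p) ⬝ᵥ (((1/2 : ℝ) • g' t) *ᵥ ((g t)⁻¹ *ᵥ p)))
          / Real.sqrt (1 + p ⬝ᵥ ((g t)⁻¹ *ᵥ p)))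
        (Set.Ici t₀) t
      ∧ p ⬝ᵥ ((g t)⁻¹ *ᵥ p) = ((g t)⁻¹ *ᵥ p) ⬝ᵥ (g t *ᵥ ((g t)⁻¹ *ᵥ p))
      ∧ 0 ≤ p ⬝ᵥ ((g t)⁻¹ *ᵥ p) := by
    intro t ht p
    have hdet : IsUnit (g t).det :=
      isUnit_iff_ne_zero.2 (ne_of_gt (hpos t ht).det_pos)
    have hhsym : ((g t)⁻¹).IsSymm := by
      show ((g t)⁻¹)ᵀ = (g t)⁻¹
      rw [Matrix.transpose_nonsing_inv, (hsymm t ht).eq]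
    have hhg : (g t)⁻¹ * g t = 1 := Matrix.nonsing_inv_mul _ hdet
    have hφ0 : 0 ≤ p ⬝ᵥ ((g t)⁻¹ *ᵥ p) := by
      have := ((hpos t ht).inv).posSemidef.dotProduct_mulVec_nonneg p
      simpa using this
    have hgram : p ⬝ᵥ ((g t)⁻¹ *ᵥ p)
        = ((g t)⁻¹ *ᵥ p) ⬝ᵥ (g t *ᵥ ((g t)⁻¹ *ᵥ p)) := by
      have e1 : (g t)⁻¹ *ᵥ (g t *ᵥ ((g t)⁻¹ *ᵥ p)) = (g t)⁻¹ *ᵥ p := by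
        rw [Matrix.mulVec_mulVec, Matrix.mulVec_mulVec, mul_assoc,
          Matrix.mul_nonsing_inv _ hdet, mul_one]
      rw [← BianchiAux.symm_dot ((g t)⁻¹) hhsym p (g t *ᵥ ((g t)⁻¹ *ᵥ p)), e1]
    have hqd := BianchiAux.quad_deriv t₀ g g' hpos hderiv ht p
    have hval : p ⬝ᵥ (((g t)⁻¹ * g' t * (g t)⁻¹) *ᵥ p)
        = 2 * (((g t)⁻¹ *ᵥ p) ⬝ᵥ (((1/2 : ℝ) • g' t) *ᵥ ((g t)⁻¹ *ᵥ p))) := by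
      have e1 : (g t)⁻¹ *ᵥ (g' t *ᵥ ((g t)⁻¹ *ᵥ p))
          = ((g t)⁻¹ * g' t * (g t)⁻¹) *ᵥ p := by
        rw [Matrix.mulVec_mulVec, Matrix.mulVec_mulVec]
      rw [← e1, BianchiAux.symm_dot ((g t)⁻¹) hhsym p (g' t *ᵥ ((g t)⁻¹ *ᵥ p))]
      have e2 : g' t = (2:ℝ) • ((1/2 : ℝ) • g' t) := by
        rw [smul_smul]; norm_num
      conv_lhs => rw [e2]
      rw [Matrix.smul_mulVec, dotProduct_smul, smul_eq_mul]
    have hφd : HasDerivWithinAt (fun s => p ⬝ᵥ ((g s)⁻¹ *ᵥ p))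
        (-(2 * (((g t)⁻¹ *ᵥ p) ⬝ᵥ (((1/2 : ℝ) • g' t) *ᵥ ((g t)⁻¹ *ᵥ p)))))
        (Set.Ici t₀) t := by
      rw [← hval]; exact hqd
    have h1φ : (0:ℝ) < 1 + p ⬝ᵥ ((g t)⁻¹ *ᵥ p) := by linarith
    have hsd := (Real.hasDerivAt_sqrt (ne_of_gt h1φ)).comp_hasDerivWithinAt t
      (hφd.const_add 1)
    have hvv : 1 / (2 * Real.sqrt (1 + p ⬝ᵥ ((g t)⁻¹ *ᵥ p)))
          * (-(2 * (((g t)⁻¹ *ᵥ p) ⬝ᵥ (((1/2 : ℝ) • g' t) *ᵥ ((g t)⁻¹ *ᵥ p)))))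
        = -(((g t)⁻¹ *ᵥ p) ⬝ᵥ (((1/2 : ℝ) • g' t) *ᵥ ((g t)⁻¹ *ᵥ p)))
          / Real.sqrt (1 + p ⬝ᵥ ((g t)⁻¹ *ᵥ p)) := by
      have hsq : Real.sqrt (1 + p ⬝ᵥ ((g t)⁻¹ *ᵥ p)) ≠ 0 :=
        ne_of_gt (Real.sqrt_pos.2 h1φ)
      have key : ∀ a b : ℝ, b ≠ 0 → 1/(2*b) * (-(2*a)) = -a/b := by
        intro a b hb; field_simp
      exact key _ _ hsq
    rw [hvv] at hsd
    exact ⟨hsd, hgram, hφ0⟩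
  constructor
  · -- part (i)
    intro p hp
    apply strictAntiOn_of_deriv_neg (convex_Ici t₀)
    · intro x hx
      exact ((main x hx p).1).continuousWithinAt
    · intro x hx
      rw [interior_Ici] at hx
      have hx' : x ∈ Set.Ici t₀ := Set.mem_Ici.2 (le_of_lt (Set.mem_Ioi.1 hx))
      obtain ⟨hd, hgram, hφ0⟩ := main x hx' p
      rw [(hd.hasDerivAt (Ici_mem_nhds hx)).deriv]
      have hdet : IsUnit (g x).det :=
        isUnit_iff_ne_zero.2 (ne_of_gt (hpos x hx').det_pos)
      have hq0 : (g x)⁻¹ *ᵥ p ≠ 0 := by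
        intro hq
        apply hp
        have hpe : p = g x *ᵥ ((g x)⁻¹ *ᵥ p) := by
          rw [Matrix.mulVec_mulVec, Matrix.mul_nonsing_inv _ hdet, Matrix.one_mulVec]
        rw [hpe, hq, Matrix.mulVec_zero]
      have hkpos := (BianchiAux.kinetic_bounds (g x) ((1/2 : ℝ) • g' x)
        (hpos x hx') (hksym x hx') (hH x hx') (hF x hx')).1 _ hq0
      exact div_neg_of_neg_of_pos (neg_lt_zero.2 hkpos)
        (Real.sqrt_pos.2 (by linarith))
  · -- part (ii)
    intro c₀ H₀ hc hH₀
    have hH₀pos : 0 < H₀ := lt_of_lt_of_le (hH t₀ Set.self_mem_Ici) (hH₀ t₀ Set.self_mem_Ici)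
    have hc₀pos : 0 < c₀ := by
      have h1 : (0:ℝ) < (fun _ => (1:ℝ)) ⬝ᵥ ((g t₀)⁻¹ *ᵥ (fun _ => (1:ℝ))) := by
        have := ((hpos t₀ Set.self_mem_Ici).inv).dotProduct_mulVec_pos (x := fun _ => (1:ℝ)) (by
          intro h
          have := congrFun h 0
          norm_num at this)
        simpa using this
      have h2 := hc t₀ Set.self_mem_Ici (fun _ => (1:ℝ))
      have h3 : ((fun _ => (1:ℝ)) : Fin 3 → ℝ) ⬝ᵥ ((fun _ => (1:ℝ)) : Fin 3 → ℝ) = (3:ℝ) := by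
        simp [dotProduct]
      rw [h3] at h2
      linarith
    refine ⟨2 * H₀ * Real.sqrt c₀, by positivity, ?_⟩
    intro t ht p
    obtain ⟨hd, hgram, hφ0⟩ := main t ht p
    rw [hd.derivWithin ((uniqueDiffOn_Ici t₀) t ht)]
    have hb := (BianchiAux.kinetic_bounds (g t) ((1/2 : ℝ) • g' t)
      (hpos t ht) (hksym t ht) (hH t ht) (hF t ht)).2 ((g t)⁻¹ *ᵥ p)
    rw [← hgram] at hb
    have h1φ : (0:ℝ) < 1 + p ⬝ᵥ ((g t)⁻¹ *ᵥ p) := by linarith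
    have hsp : 0 < Real.sqrt (1 + p ⬝ᵥ ((g t)⁻¹ *ᵥ p)) := Real.sqrt_pos.2 h1φ
    rw [abs_div, abs_neg, abs_of_pos hsp]
    have hppos : 0 ≤ p ⬝ᵥ p := BianchiAux.dot_self_nonneg p
    have hHt := hH t ht
    have hHt0 := hH₀ t ht
    have s1 : (p ⬝ᵥ ((g t)⁻¹ *ᵥ p)) / Real.sqrt (1 + p ⬝ᵥ ((g t)⁻¹ *ᵥ p))
        ≤ Real.sqrt (p ⬝ᵥ ((g t)⁻¹ *ᵥ p)) := by
      rw [div_le_iff₀ hsp]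
      calc p ⬝ᵥ ((g t)⁻¹ *ᵥ p)
          = Real.sqrt (p ⬝ᵥ ((g t)⁻¹ *ᵥ p)) * Real.sqrt (p ⬝ᵥ ((g t)⁻¹ *ᵥ p)) :=
            (Real.mul_self_sqrt hφ0).symm
        _ ≤ Real.sqrt (p ⬝ᵥ ((g t)⁻¹ *ᵥ p)) * Real.sqrt (1 + p ⬝ᵥ ((g t)⁻¹ *ᵥ p)) :=
            mul_le_mul_of_nonneg_left (Real.sqrt_le_sqrt (by linarith))
              (Real.sqrt_nonneg _)
    have s2 : Real.sqrt (p ⬝ᵥ ((g t)⁻¹ *ᵥ p))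
        ≤ Real.sqrt c₀ * Real.sqrt (1 + p ⬝ᵥ p) := by
      calc Real.sqrt (p ⬝ᵥ ((g t)⁻¹ *ᵥ p))
          ≤ Real.sqrt (c₀ * (p ⬝ᵥ p)) := Real.sqrt_le_sqrt (hc t ht p)
        _ = Real.sqrt c₀ * Real.sqrt (p ⬝ᵥ p) := Real.sqrt_mul hc₀pos.le _
        _ ≤ Real.sqrt c₀ * Real.sqrt (1 + p ⬝ᵥ p) :=
            mul_le_mul_of_nonneg_left (Real.sqrt_le_sqrt (by linarith))
              (Real.sqrt_nonneg _)
    calc |((g t)⁻¹ *ᵥ p) ⬝ᵥ (((1/2 : ℝ) • g' t) *ᵥ ((g t)⁻¹ *ᵥ p))|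
          / Real.sqrt (1 + p ⬝ᵥ ((g t)⁻¹ *ᵥ p))
        ≤ (2 * hubble (g t) ((1/2 : ℝ) • g' t) * (p ⬝ᵥ ((g t)⁻¹ *ᵥ p)))
          / Real.sqrt (1 + p ⬝ᵥ ((g t)⁻¹ *ᵥ p)) := by
          exact div_le_div_of_nonneg_right hb hsp.le
      _ = 2 * hubble (g t) ((1/2 : ℝ) • g' t)
          * ((p ⬝ᵥ ((g t)⁻¹ *ᵥ p)) / Real.sqrt (1 + p ⬝ᵥ ((g t)⁻¹ *ᵥ p))) := by
          ring
      _ ≤ 2 * hubble (g t) ((1/2 : ℝ) • g' t) * Real.sqrt (p ⬝ᵥ ((g t)⁻¹ *ᵥ p)) :=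
          mul_le_mul_of_nonneg_left s1 (by positivity)
      _ ≤ 2 * H₀ * Real.sqrt (p ⬝ᵥ ((g t)⁻¹ *ᵥ p)) :=
          mul_le_mul_of_nonneg_right (by linarith) (Real.sqrt_nonneg _)
      _ ≤ 2 * H₀ * (Real.sqrt c₀ * Real.sqrt (1 + p ⬝ᵥ p)) :=
          mul_le_mul_of_nonneg_left s2 (by positivity)
      _ = 2 * H₀ * Real.sqrt c₀ * Real.sqrt (1 + p ⬝ᵥ p) := by ring

end
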